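/- Let r be a nonzero integer. There is an injective group homomorphism μ from H_r to Γ_r determined by μ(g₁) = ((1,0), 0), μ(g₂) = ((0,1), 0), μ(g₃) = ((0,0), 1); it satisfies μ(g₁^{l₁} g₂^{l₂} g₃^{l₃}) = ((l₁,l₂), l₃ + l₁ l₂ r/2) for all integers l₁, l₂, l₃. -/

import Mathlib

/-- `ℤ[r/2]`: the additive subgroup of `ℚ` generated by `1` and `r/2`;
it equals `ℤ` if `r` is even and `(1/2)ℤ` if `r` is odd. -/
def Zr (r : ℤ) : AddSubgroup ℚ := AddSubgroup.closure {1, (r : ℚ) / 2}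

lemma intCast_mem_Zr (r n : ℤ) : (n : ℚ) ∈ Zr r := by
  have h1 : (1 : ℚ) ∈ Zr r := AddSubgroup.subset_closure (by simp)
  simpa using AddSubgroup.zsmul_mem _ h1 n

lemma half_mul_intCast_mem_Zr (r n : ℤ) : (r : ℚ) / 2 * (n : ℚ) ∈ Zr r := by
  have h1 : (r : ℚ) / 2 ∈ Zr r := AddSubgroup.subset_closure (by simp)
  have := AddSubgroup.zsmul_mem _ h1 n
  simpa [zsmul_eq_mul, mul_comm] using this

/-- The group `Γ_r`, with underlying set `ℤ² × ℤ[r/2]` and multiplication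
`(ζ, y)(ζ', y') = (ζ + ζ', y + y' + (r/2) det(ζ, ζ'))`. -/
@[ext]
structure GammaR (r : ℤ) where
  zeta : Fin 2 → ℤ
  y : ℚ
  hy : y ∈ Zr r

namespace GammaR

variable {r : ℤ}

instance : Mul (GammaR r) :=
  ⟨fun a b =>
    ⟨a.zeta + b.zeta,
     a.y + b.y + (r : ℚ) / 2 * ((a.zeta 0 * b.zeta 1 - a.zeta 1 * b.zeta 0 : ℤ) : ℚ),
     add_mem (add_mem a.hy b.hy) (half_mul_intCast_mem_Zr r _)⟩⟩

instance : One (GammaR r) := ⟨⟨0, 0, zero_mem _⟩⟩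

instance : Inv (GammaR r) := ⟨fun a => ⟨-a.zeta, -a.y, neg_mem a.hy⟩⟩

@[simp] lemma mul_zeta (a b : GammaR r) : (a * b).zeta = a.zeta + b.zeta := rfl
@[simp] lemma mul_y (a b : GammaR r) :
    (a * b).y = a.y + b.y + (r : ℚ) / 2 *
      ((a.zeta 0 * b.zeta 1 - a.zeta 1 * b.zeta 0 : ℤ) : ℚ) := rfl
@[simp] lemma one_zeta : (1 : GammaR r).zeta = 0 := rfl
@[simp] lemma one_y : (1 : GammaR r).y = 0 := rfl
@[simp] lemma inv_zeta (a : GammaR r) : a⁻¹.zeta = -a.zeta := rfl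
@[simp] lemma inv_y (a : GammaR r) : a⁻¹.y = -a.y := rfl

instance : Group (GammaR r) where
  mul_assoc a b c := by
    ext
    · simp [add_assoc]
    · simp only [mul_y, mul_zeta, Pi.add_apply]
      push_cast
      ring
  one_mul a := by ext <;> simp
  mul_one a := by ext <;> simp
  inv_mul_cancel a := by
    ext
    · simp
    · simp only [mul_y, inv_y, inv_zeta, Pi.neg_apply, one_y]
      push_cast
      ring

/-- The element `((l₁,l₂), l₃ + l₁l₂r/2)` of `Γ_r`. -/
def elt (r l1 l2 l3 : ℤ) : GammaR r :=
  ⟨![l1, l2], (l3 : ℚ) + (l1 : ℚ) * (l2 : ℚ) * (r : ℚ) / 2, by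
    have h1 := intCast_mem_Zr r l3
    have h2 := half_mul_intCast_mem_Zr r (l1 * l2)
    have : (l3 : ℚ) + (r : ℚ) / 2 * ((l1 * l2 : ℤ) : ℚ) ∈ Zr r := add_mem h1 h2
    convert this using 1
    push_cast
    ring⟩

end GammaR

/-- The relations of the group `H_r`: generators `g₁,g₂,g₃` (indexed by `Fin 3`) and
relations `g₁g₂g₁⁻¹g₂⁻¹ = g₃^{r}`, `g₁g₃ = g₃g₁`, `g₂g₃ = g₃g₂`. -/
def hRels (r : ℤ) : Set (FreeGroup (Fin 3)) :=
  { FreeGroup.of 0 * FreeGroup.of 1 * (FreeGroup.of 0)⁻¹ * (FreeGroup.of 1)⁻¹ *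
      ((FreeGroup.of 2) ^ r)⁻¹,
    FreeGroup.of 0 * FreeGroup.of 2 * (FreeGroup.of 0)⁻¹ * (FreeGroup.of 2)⁻¹,
    FreeGroup.of 1 * FreeGroup.of 2 * (FreeGroup.of 1)⁻¹ * (FreeGroup.of 2)⁻¹ }

/-- The group `H_r`. -/
abbrev Hr (r : ℤ) := PresentedGroup (hRels r)


namespace StmtAux

open GammaR

variable {r : ℤ}

lemma elt_mul (a b c d e f : ℤ) :
    elt r a b c * elt r d e f = elt r (a + d) (b + e) (c + f - r * b * d) := by
  ext i
  · fin_cases i <;> simp [elt]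
  · simp only [GammaR.mul_y, elt, Matrix.cons_val_zero, Matrix.cons_val_one, Matrix.head_cons]
    push_cast
    ring

lemma elt_zero : (elt r 0 0 0) = 1 := by
  ext i
  · fin_cases i <;> simp [elt]
  · simp [elt]

lemma elt_congr {a b c a' b' c' : ℤ} (h1 : a = a') (h2 : b = b') (h3 : c = c') :
    elt r a b c = elt r a' b' c' := by subst h1; subst h2; subst h3; rfl

lemma elt_inv (a b c : ℤ) : (elt r a b c)⁻¹ = elt r (-a) (-b) (-c - r * a * b) := by
  apply inv_eq_of_mul_eq_one_right
  rw [elt_mul]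
  exact (elt_congr (by ring) (by ring) (by ring)).trans elt_zero

lemma elt_g1_zpow (n : ℤ) : (elt r 1 0 0) ^ n = elt r n 0 0 := by
  induction n using Int.induction_on with
  | zero => rw [zpow_zero]; exact elt_zero.symm
  | succ d ih =>
      rw [zpow_add_one, ih, elt_mul]; exact elt_congr (by ring) (by ring) (by ring)
  | pred d ih =>
      rw [zpow_sub_one, ih, elt_inv, elt_mul]; exact elt_congr (by ring) (by ring) (by ring)

lemma elt_g2_zpow (n : ℤ) : (elt r 0 1 0) ^ n = elt r 0 n 0 := by
  induction n using Int.induction_on with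
  | zero => rw [zpow_zero]; exact elt_zero.symm
  | succ d ih =>
      rw [zpow_add_one, ih, elt_mul]; exact elt_congr (by ring) (by ring) (by ring)
  | pred d ih =>
      rw [zpow_sub_one, ih, elt_inv, elt_mul]; exact elt_congr (by ring) (by ring) (by ring)

lemma elt_g3_zpow (n : ℤ) : (elt r 0 0 1) ^ n = elt r 0 0 n := by
  induction n using Int.induction_on with
  | zero => rw [zpow_zero]; exact elt_zero.symm
  | succ d ih =>
      rw [zpow_add_one, ih, elt_mul]; exact elt_congr (by ring) (by ring) (by ring)
  | pred d ih =>
      rw [zpow_sub_one, ih, elt_inv, elt_mul]; exact elt_congr (by ring) (by ring) (by ring)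

lemma elt_eq_one {a b c : ℤ} (h : elt r a b c = 1) : a = 0 ∧ b = 0 ∧ c = 0 := by
  have hz := congrArg GammaR.zeta h
  have ha : a = 0 := by simpa [elt] using congrFun hz 0
  have hb : b = 0 := by simpa [elt] using congrFun hz 1
  have hy := congrArg GammaR.y h
  subst ha; subst hb
  simp only [elt, GammaR.one_y] at hy
  push_cast at hy
  refine ⟨rfl, rfl, ?_⟩
  have : (c : ℚ) = 0 := by linarith
  exact_mod_cast this

/-! ### Lemmas about `Hr r` -/

/-- Relators are trivial in the presented group. -/
lemma mk_rel {w : FreeGroup (Fin 3)} (hw : w ∈ hRels r) :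
    PresentedGroup.mk (hRels r) w = 1 := by
  have : w ∈ Subgroup.normalClosure (hRels r) := Subgroup.subset_normalClosure hw
  exact (QuotientGroup.eq_one_iff w).mpr this

lemma comm13 : (PresentedGroup.of 0 : Hr r) * PresentedGroup.of 2 =
    PresentedGroup.of 2 * PresentedGroup.of 0 := by
  have hmem : (FreeGroup.of 0 * FreeGroup.of 2 * (FreeGroup.of 0)⁻¹ * (FreeGroup.of 2)⁻¹ :
      FreeGroup (Fin 3)) ∈ hRels r := by right; left; rfl
  have h := mk_rel hmem
  simp only [map_mul, map_inv] at h
  rw [mul_inv_eq_one, mul_inv_eq_iff_eq_mul] at h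
  exact h

lemma comm23 : (PresentedGroup.of 1 : Hr r) * PresentedGroup.of 2 =
    PresentedGroup.of 2 * PresentedGroup.of 1 := by
  have hmem : (FreeGroup.of 1 * FreeGroup.of 2 * (FreeGroup.of 1)⁻¹ * (FreeGroup.of 2)⁻¹ :
      FreeGroup (Fin 3)) ∈ hRels r := by right; right; rfl
  have h := mk_rel hmem
  simp only [map_mul, map_inv] at h
  rw [mul_inv_eq_one, mul_inv_eq_iff_eq_mul] at h
  exact h

lemma rel1 : (PresentedGroup.of 0 : Hr r) * PresentedGroup.of 1 * (PresentedGroup.of 0)⁻¹ *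
    (PresentedGroup.of 1)⁻¹ = (PresentedGroup.of 2) ^ r := by
  have hmem : (FreeGroup.of 0 * FreeGroup.of 1 * (FreeGroup.of 0)⁻¹ * (FreeGroup.of 1)⁻¹ *
      ((FreeGroup.of 2) ^ r)⁻¹ : FreeGroup (Fin 3)) ∈ hRels r := by left; rfl
  have h := mk_rel hmem
  simp only [map_mul, map_inv, map_zpow] at h
  rw [mul_inv_eq_one] at h
  exact h

/-- `g₃` is central in `Hr r`. -/
lemma g3_comm (x : Hr r) : Commute x (PresentedGroup.of 2) := by
  have hx : x ∈ Subgroup.centralizer ({PresentedGroup.of 2} : Set (Hr r)) := by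
    apply PresentedGroup.generated_by
    intro j
    rw [Subgroup.mem_centralizer_iff]
    rintro g hg
    rw [Set.mem_singleton_iff] at hg
    subst hg
    fin_cases j
    · exact comm13.symm
    · exact comm23.symm
    · rfl
  exact (Subgroup.mem_centralizer_iff.mp hx (PresentedGroup.of 2) rfl).symm

lemma g3_zpow_comm (k : ℤ) (x : Hr r) :
    Commute x ((PresentedGroup.of 2 : Hr r) ^ k) := (g3_comm x).zpow_right k

/-- Abstract: if `z` is central and `g u g⁻¹ = u z`, then `gᵈ u g⁻ᵈ = u zᵈ`. -/
lemma conj_central {G : Type*} [Group G] (g u z : G) (hz : ∀ x : G, Commute x z)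
    (h : g * u * g⁻¹ = u * z) (d : ℤ) : g ^ d * u * (g ^ d)⁻¹ = u * z ^ d := by
  have h' : g⁻¹ * u * g = u * z⁻¹ := by
    have hu : u = g * u * g⁻¹ * z⁻¹ := by rw [h]; group
    calc g⁻¹ * u * g = g⁻¹ * (g * u * g⁻¹ * z⁻¹) * g := by conv_lhs => rw [hu]
      _ = u * (g⁻¹ * (z⁻¹ * g)) := by group
      _ = u * (g⁻¹ * (g * z⁻¹)) := by rw [← ((hz g).inv_right).eq]
      _ = u * z⁻¹ := by group
  induction d using Int.induction_on with
  | zero => simp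
  | succ d ih =>
      have hzd : g * z ^ (d : ℤ) * g⁻¹ = z ^ (d : ℤ) := by
        rw [((hz g).zpow_right (d : ℤ)).eq]; group
      calc g ^ ((d : ℤ) + 1) * u * (g ^ ((d : ℤ) + 1))⁻¹
          = g * (g ^ (d : ℤ) * u * (g ^ (d : ℤ))⁻¹) * g⁻¹ := by
            rw [show (d : ℤ) + 1 = 1 + (d : ℤ) from add_comm _ _, zpow_one_add]; group
        _ = g * (u * z ^ (d : ℤ)) * g⁻¹ := by rw [ih]
        _ = (g * u * g⁻¹) * (g * z ^ (d : ℤ) * g⁻¹) := by group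
        _ = (u * z) * z ^ (d : ℤ) := by rw [h, hzd]
        _ = u * z ^ ((d : ℤ) + 1) := by
            rw [mul_assoc, ← zpow_one_add, add_comm]
  | pred d ih =>
      have hzd : g⁻¹ * z ^ (-(d : ℤ)) * g = z ^ (-(d : ℤ)) := by
        rw [((hz g⁻¹).zpow_right (-(d : ℤ))).eq]; group
      calc g ^ (-(d : ℤ) - 1) * u * (g ^ (-(d : ℤ) - 1))⁻¹
          = g⁻¹ * (g ^ (-(d : ℤ)) * u * (g ^ (-(d : ℤ)))⁻¹) * g := by
            rw [show -(d : ℤ) - 1 = (-1) + (-(d : ℤ)) from by ring, zpow_add, zpow_neg_one]; group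
        _ = g⁻¹ * (u * z ^ (-(d : ℤ))) * g := by rw [ih]
        _ = (g⁻¹ * u * g) * (g⁻¹ * z ^ (-(d : ℤ)) * g) := by group
        _ = (u * z⁻¹) * z ^ (-(d : ℤ)) := by rw [h', hzd]
        _ = u * z ^ (-(d : ℤ) - 1) := by
            rw [mul_assoc, ← zpow_neg_one, ← zpow_add, show (-1 : ℤ) + -(d : ℤ) = -(d : ℤ) - 1 from by ring]

/-- Conjugation of `g₂` by `g₁`. -/
lemma conj_g2 : (PresentedGroup.of 0 : Hr r) * PresentedGroup.of 1 * (PresentedGroup.of 0)⁻¹ =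
    PresentedGroup.of 1 * (PresentedGroup.of 2) ^ r := by
  have h := (rel1 (r := r))
  rw [mul_inv_eq_iff_eq_mul] at h
  rw [h]
  exact (g3_zpow_comm r _).symm.eq

/-- Conjugation of `g₂^b` by `g₁^d`. -/
lemma conj_pow (b d : ℤ) :
    (PresentedGroup.of 0 : Hr r) ^ d * (PresentedGroup.of 1) ^ b * ((PresentedGroup.of 0) ^ d)⁻¹ =
    (PresentedGroup.of 1) ^ b * (PresentedGroup.of 2) ^ (r * b * d) := by
  -- first conjugate `g₂` by `g₁^d`, then take `b`-th powers
  have hz : ∀ x : Hr r, Commute x ((PresentedGroup.of 2) ^ r) := fun x => g3_zpow_comm r x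
  have base := conj_central (PresentedGroup.of 0 : Hr r) (PresentedGroup.of 1)
    ((PresentedGroup.of 2) ^ r) hz conj_g2 d
  -- base : g1^d * g2 * (g1^d)⁻¹ = g2 * (g3^r)^d
  have hb : ((PresentedGroup.of 1 : Hr r) * ((PresentedGroup.of 2) ^ r) ^ d) ^ b =
      (PresentedGroup.of 1) ^ b * (((PresentedGroup.of 2) ^ r) ^ d) ^ b :=
    ((g3_zpow_comm r _).zpow_right d).mul_zpow b
  calc (PresentedGroup.of 0 : Hr r) ^ d * (PresentedGroup.of 1) ^ b * ((PresentedGroup.of 0) ^ d)⁻¹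
      = ((PresentedGroup.of 0 : Hr r) ^ d * PresentedGroup.of 1 * ((PresentedGroup.of 0) ^ d)⁻¹) ^ b :=
        conj_zpow.symm
    _ = ((PresentedGroup.of 1 : Hr r) * ((PresentedGroup.of 2) ^ r) ^ d) ^ b := by rw [base]
    _ = (PresentedGroup.of 1) ^ b * (PresentedGroup.of 2) ^ (r * b * d) := by
        rw [hb, ← zpow_mul, ← zpow_mul]
        congr 1
        ring

/-- Swap rule: `g₂^b g₁^d = g₁^d g₂^b g₃^{-rbd}`. -/
lemma swap (b d : ℤ) :
    (PresentedGroup.of 1 : Hr r) ^ b * (PresentedGroup.of 0) ^ d =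
    (PresentedGroup.of 0) ^ d * ((PresentedGroup.of 1) ^ b *
      (PresentedGroup.of 2) ^ (r * b * (-d))) := by
  have h := conj_pow (r := r) b (-d)
  rw [zpow_neg] at h
  -- h : g1^d⁻¹... careful: (g1)^(-d) = (g1^d)⁻¹
  -- h : (g1^d)⁻¹ * g2^b * ((g1^d)⁻¹)⁻¹ = g2^b * g3^(r*b*(-d))
  calc (PresentedGroup.of 1 : Hr r) ^ b * (PresentedGroup.of 0) ^ d
      = (PresentedGroup.of 0) ^ d *
          (((PresentedGroup.of 0) ^ d)⁻¹ * (PresentedGroup.of 1) ^ b *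
            (((PresentedGroup.of 0) ^ d)⁻¹)⁻¹) := by group
    _ = _ := by rw [h]

/-- Multiplication rule for normal forms. -/
lemma norm_mul (a b c d e f : ℤ) :
    ((PresentedGroup.of 0 : Hr r) ^ a * (PresentedGroup.of 1) ^ b * (PresentedGroup.of 2) ^ c) *
      ((PresentedGroup.of 0) ^ d * (PresentedGroup.of 1) ^ e * (PresentedGroup.of 2) ^ f) =
    (PresentedGroup.of 0) ^ (a + d) * (PresentedGroup.of 1) ^ (b + e) *
      (PresentedGroup.of 2) ^ (c + f - r * b * d) := by
  have e1 : (PresentedGroup.of 2 : Hr r) ^ c *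
      ((PresentedGroup.of 0) ^ d * (PresentedGroup.of 1) ^ e * (PresentedGroup.of 2) ^ f) =
      ((PresentedGroup.of 0) ^ d * (PresentedGroup.of 1) ^ e * (PresentedGroup.of 2) ^ f) *
        (PresentedGroup.of 2) ^ c := ((g3_zpow_comm c _).eq).symm
  have e2 : (PresentedGroup.of 2 : Hr r) ^ (r * b * (-d)) * (PresentedGroup.of 1) ^ e =
      (PresentedGroup.of 1) ^ e * (PresentedGroup.of 2) ^ (r * b * (-d)) :=
    ((g3_zpow_comm (r * b * (-d)) _).eq).symm
  calc ((PresentedGroup.of 0 : Hr r) ^ a * (PresentedGroup.of 1) ^ b * (PresentedGroup.of 2) ^ c) *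
        ((PresentedGroup.of 0) ^ d * (PresentedGroup.of 1) ^ e * (PresentedGroup.of 2) ^ f)
      = ((PresentedGroup.of 0) ^ a * (PresentedGroup.of 1) ^ b) *
          ((PresentedGroup.of 2) ^ c *
            ((PresentedGroup.of 0) ^ d * (PresentedGroup.of 1) ^ e * (PresentedGroup.of 2) ^ f)) := by
        group
    _ = ((PresentedGroup.of 0) ^ a * (PresentedGroup.of 1) ^ b) *
          (((PresentedGroup.of 0) ^ d * (PresentedGroup.of 1) ^ e * (PresentedGroup.of 2) ^ f) *
            (PresentedGroup.of 2) ^ c) := by rw [e1]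
    _ = (PresentedGroup.of 0) ^ a *
          ((PresentedGroup.of 1) ^ b * (PresentedGroup.of 0) ^ d) *
          ((PresentedGroup.of 1) ^ e * ((PresentedGroup.of 2) ^ f * (PresentedGroup.of 2) ^ c)) := by
        group
    _ = (PresentedGroup.of 0) ^ a *
          ((PresentedGroup.of 0) ^ d * ((PresentedGroup.of 1) ^ b *
            (PresentedGroup.of 2) ^ (r * b * (-d)))) *
          ((PresentedGroup.of 1) ^ e * ((PresentedGroup.of 2) ^ f * (PresentedGroup.of 2) ^ c)) := by
        rw [swap]
    _ = ((PresentedGroup.of 0) ^ a * (PresentedGroup.of 0) ^ d) * (PresentedGroup.of 1) ^ b *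
          ((PresentedGroup.of 2) ^ (r * b * (-d)) * (PresentedGroup.of 1) ^ e) *
          ((PresentedGroup.of 2) ^ f * (PresentedGroup.of 2) ^ c) := by group
    _ = ((PresentedGroup.of 0) ^ a * (PresentedGroup.of 0) ^ d) * (PresentedGroup.of 1) ^ b *
          ((PresentedGroup.of 1) ^ e * (PresentedGroup.of 2) ^ (r * b * (-d))) *
          ((PresentedGroup.of 2) ^ f * (PresentedGroup.of 2) ^ c) := by rw [e2]
    _ = ((PresentedGroup.of 0) ^ a * (PresentedGroup.of 0) ^ d) *
          ((PresentedGroup.of 1) ^ b * (PresentedGroup.of 1) ^ e) *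
          ((PresentedGroup.of 2) ^ (r * b * (-d)) * ((PresentedGroup.of 2) ^ f *
            (PresentedGroup.of 2) ^ c)) := by group
    _ = (PresentedGroup.of 0) ^ (a + d) * (PresentedGroup.of 1) ^ (b + e) *
          (PresentedGroup.of 2) ^ (r * b * (-d) + (f + c)) := by
        rw [← zpow_add, ← zpow_add, ← zpow_add, ← zpow_add]
    _ = _ := by rw [show r * b * (-d) + (f + c) = c + f - r * b * d from by ring]

/-- Every element of `Hr r` has a normal form. -/
lemma normal_form (x : Hr r) : ∃ a b c : ℤ,
    x = (PresentedGroup.of 0 : Hr r) ^ a * (PresentedGroup.of 1) ^ b * (PresentedGroup.of 2) ^ c := by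
  let S : Subgroup (Hr r) :=
    { carrier := {x | ∃ a b c : ℤ,
        x = (PresentedGroup.of 0 : Hr r) ^ a * (PresentedGroup.of 1) ^ b * (PresentedGroup.of 2) ^ c}
      one_mem' := ⟨0, 0, 0, by simp⟩
      mul_mem' := by
        rintro x y ⟨a, b, c, rfl⟩ ⟨d, e, f, rfl⟩
        exact ⟨a + d, b + e, c + f - r * b * d, norm_mul (r := r) a b c d e f⟩
      inv_mem' := by
        rintro x ⟨a, b, c, rfl⟩
        refine ⟨-a, -b, -c - r * a * b, ?_⟩
        symm
        apply eq_inv_of_mul_eq_one_right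
        rw [norm_mul, show a + -a = 0 from by ring, show b + -b = 0 from by ring,
          show c + (-c - r * a * b) - r * b * -a = 0 from by ring]
        simp }
  exact PresentedGroup.generated_by _ S
    (fun j => by
      fin_cases j
      · exact ⟨1, 0, 0, by simp⟩
      · exact ⟨0, 1, 0, by simp⟩
      · exact ⟨0, 0, 1, by simp⟩) x

end StmtAux

/-- There is an injective group homomorphism `μ : H_r → Γ_r` determined by
`μ(g₁) = ((1,0),0)`, `μ(g₂) = ((0,1),0)`, `μ(g₃) = ((0,0),1)`; it satisfies
`μ(g₁^{l₁}g₂^{l₂}g₃^{l₃}) = ((l₁,l₂), l₃ + l₁l₂r/2)` for all integers `l₁,l₂,l₃`. -/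
theorem stmt_5 (r : ℤ) (hr : r ≠ 0) :
    ∃ μ : Hr r →* GammaR r,
      Function.Injective μ ∧
      μ (PresentedGroup.of 0) = GammaR.elt r 1 0 0 ∧
      μ (PresentedGroup.of 1) = GammaR.elt r 0 1 0 ∧
      μ (PresentedGroup.of 2) = GammaR.elt r 0 0 1 ∧
      ∀ l1 l2 l3 : ℤ,
        μ ((PresentedGroup.of 0 : Hr r) ^ l1 * PresentedGroup.of 1 ^ l2 *
            PresentedGroup.of 2 ^ l3) = GammaR.elt r l1 l2 l3 := by
  classical
  set f : Fin 3 → GammaR r := ![GammaR.elt r 1 0 0, GammaR.elt r 0 1 0, GammaR.elt r 0 0 1] with hf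
  have hf0 : f 0 = GammaR.elt r 1 0 0 := rfl
  have hf1 : f 1 = GammaR.elt r 0 1 0 := rfl
  have hf2 : f 2 = GammaR.elt r 0 0 1 := rfl
  have hrels : ∀ w ∈ hRels r, FreeGroup.lift f w = 1 := by
    intro w hw
    rcases hw with hw | hw | hw
    · subst hw
      simp only [map_mul, map_inv, map_zpow, FreeGroup.lift_apply_of, hf0, hf1, hf2]
      rw [StmtAux.elt_g3_zpow (r := r)]
      simp only [StmtAux.elt_inv, StmtAux.elt_mul]
      exact (StmtAux.elt_congr (by ring) (by ring) (by ring)).trans StmtAux.elt_zero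
    · subst hw
      simp only [map_mul, map_inv, FreeGroup.lift_apply_of, hf0, hf1, hf2]
      simp only [StmtAux.elt_inv, StmtAux.elt_mul]
      exact (StmtAux.elt_congr (by ring) (by ring) (by ring)).trans StmtAux.elt_zero
    · subst hw
      simp only [map_mul, map_inv, FreeGroup.lift_apply_of, hf0, hf1, hf2]
      simp only [StmtAux.elt_inv, StmtAux.elt_mul]
      exact (StmtAux.elt_congr (by ring) (by ring) (by ring)).trans StmtAux.elt_zero
  refine ⟨PresentedGroup.toGroup hrels, ?_, ?_, ?_, ?_, ?_⟩
  case refine_2 => exact PresentedGroup.toGroup.of hrels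
  case refine_3 => exact PresentedGroup.toGroup.of hrels
  case refine_4 => exact PresentedGroup.toGroup.of hrels
  case refine_5 =>
    intro l1 l2 l3
    rw [map_mul, map_mul, map_zpow, map_zpow, map_zpow,
      PresentedGroup.toGroup.of hrels, PresentedGroup.toGroup.of hrels,
      PresentedGroup.toGroup.of hrels, hf0, hf1, hf2,
      StmtAux.elt_g1_zpow, StmtAux.elt_g2_zpow, StmtAux.elt_g3_zpow,
      StmtAux.elt_mul, StmtAux.elt_mul]
    exact StmtAux.elt_congr (by ring) (by ring) (by ring)
  case refine_1 =>
    have hform : ∀ l1 l2 l3 : ℤ,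
        PresentedGroup.toGroup hrels ((PresentedGroup.of 0 : Hr r) ^ l1 *
          PresentedGroup.of 1 ^ l2 * PresentedGroup.of 2 ^ l3) = GammaR.elt r l1 l2 l3 := by
      intro l1 l2 l3
      rw [map_mul, map_mul, map_zpow, map_zpow, map_zpow,
        PresentedGroup.toGroup.of hrels, PresentedGroup.toGroup.of hrels,
        PresentedGroup.toGroup.of hrels, hf0, hf1, hf2,
        StmtAux.elt_g1_zpow, StmtAux.elt_g2_zpow, StmtAux.elt_g3_zpow,
        StmtAux.elt_mul, StmtAux.elt_mul]
      exact StmtAux.elt_congr (by ring) (by ring) (by ring)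
    rw [injective_iff_map_eq_one]
    intro x hx
    obtain ⟨a, b, c, rfl⟩ := StmtAux.normal_form x
    rw [hform] at hx
    obtain ⟨ha, hb, hc⟩ := StmtAux.elt_eq_one hx
    subst ha; subst hb; subst hc
    simp
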